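/- For all integers s, i, t one has Δ_s(i, t) = δ(i, −s) − δ(t, −s); explicitly, Δ_s(i, t) = 0 if either both t̄ ≥ s̄ and ī ≥ s̄ or both t̄ < s̄ and ī < s̄, Δ_s(i, t) = 1 if t̄ < s̄ ≤ ī, and Δ_s(i, t) = −1 if ī < s̄ ≤ t̄. -/

import Mathlib

/-- The carry (Delta-2) function: for integers `η, κ`,
`δ(η, κ) = (η̄ + κ̄ − (η+κ)‾)/n`, where `x̄ = x % n` is the residue of `x` modulo `n`. -/
def carry (n η κ : ℤ) : ℤ := (η % n + κ % n - (η + κ) % n) / n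

/-- The Delta-3 function: `Δ_s(i, t) = δ(i, t−i) − δ(i−s, t−i)`. -/
def delta3 (n s i t : ℤ) : ℤ := carry n i (t - i) - carry n (i - s) (t - i)

lemma carry_eq (n : ℤ) (hn : 0 < n) (η κ : ℤ) :
    carry n η κ = if η % n + κ % n < n then 0 else 1 := by
  have ha0 := Int.emod_nonneg η (ne_of_gt hn)
  have hb0 := Int.emod_nonneg κ (ne_of_gt hn)
  have ha1 := Int.emod_lt_of_pos η hn
  have hb1 := Int.emod_lt_of_pos κ hn
  have hsum : (η + κ) % n = (η % n + κ % n) % n := Int.add_emod η κ n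
  unfold carry
  split_ifs with h
  · rw [hsum, Int.emod_eq_of_lt (by omega) h]
    simp
  · have h2 : (η % n + κ % n) % n = η % n + κ % n - n := by
      rw [← Int.sub_emod_right (η % n + κ % n) n]
      exact Int.emod_eq_of_lt (by omega) (by omega)
    rw [hsum, h2, show η % n + κ % n - (η % n + κ % n - n) = n by ring,
      Int.ediv_self (ne_of_gt hn)]

lemma emod_diff (n : ℤ) (hn : 0 < n) (x : ℤ) (h1 : -n < x) (h2 : x < n) :
    x % n = x ∨ x % n = x + n := by
  rcases le_or_gt 0 x with h | h
  · exact Or.inl (Int.emod_eq_of_lt h h2)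
  · right
    have h3 : (x + n) % n = x % n := by
      simpa using Int.add_mul_emod_self_right (a := x) (b := 1) (c := n)
    rw [← h3]
    exact Int.emod_eq_of_lt (by omega) (by omega)

theorem stmt2 (n : ℤ) (hn : 2 ≤ n) (s i t : ℤ) :
    delta3 n s i t = carry n i (-s) - carry n t (-s) ∧
    delta3 n s i t =
      (if (s % n ≤ t % n ∧ s % n ≤ i % n) ∨ (t % n < s % n ∧ i % n < s % n) then 0
       else if t % n < s % n ∧ s % n ≤ i % n then 1
       else -1) := by
  have hn0 : 0 < n := by omega
  have ha0 := Int.emod_nonneg i (ne_of_gt hn0)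
  have hb0 := Int.emod_nonneg t (ne_of_gt hn0)
  have hc0 := Int.emod_nonneg s (ne_of_gt hn0)
  have ha1 := Int.emod_lt_of_pos i hn0
  have hb1 := Int.emod_lt_of_pos t hn0
  have hc1 := Int.emod_lt_of_pos s hn0
  have hd : (t - i) % n = (t % n - i % n) % n := by rw [Int.sub_emod]
  have he : (i - s) % n = (i % n - s % n) % n := by rw [Int.sub_emod]
  have hf : (-s) % n = (-(s % n)) % n := by simpa using Int.sub_emod 0 s n
  have hd0 := Int.emod_nonneg (t % n - i % n) (ne_of_gt hn0)
  have he0 := Int.emod_nonneg (i % n - s % n) (ne_of_gt hn0)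
  have hf0 := Int.emod_nonneg (-(s % n)) (ne_of_gt hn0)
  have hd1 := Int.emod_lt_of_pos (t % n - i % n) hn0
  have he1 := Int.emod_lt_of_pos (i % n - s % n) hn0
  have hf1 := Int.emod_lt_of_pos (-(s % n)) hn0
  have hd' := emod_diff n hn0 (t % n - i % n) (by omega) (by omega)
  have he' := emod_diff n hn0 (i % n - s % n) (by omega) (by omega)
  have hf' := emod_diff n hn0 (-(s % n)) (by omega) (by omega)
  unfold delta3
  rw [carry_eq n hn0, carry_eq n hn0, carry_eq n hn0, carry_eq n hn0, hd, he, hf]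
  rcases hd' with hd' | hd' <;> rcases he' with he' | he' <;> rcases hf' with hf' | hf' <;>
    exact ⟨by split_ifs <;> omega, by split_ifs <;> omega⟩
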